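/- For every digraph X, the largest eigenvalue λ₁(X) of H(X) and the spectral radius ρ(X) satisfy λ₁(X) ≤ ρ(X) ≤ 3·λ₁(X). -/

import Mathlib

open Matrix Complex

/-- Hermitian adjacency matrix of a digraph given by its arc relation `E`. -/
def hermAdj {V : Type*} (E : V → V → Prop) [DecidableRel E] : Matrix V V ℂ :=
  fun u v =>
    if E u v ∧ E v u then 1
    else if E u v then Complex.I
    else if E v u then -Complex.I
    else 0

lemma myRexpand {V : Type*} [Fintype V] (H : Matrix V V ℂ) (w : V → ℂ) :
    (star w ⬝ᵥ H *ᵥ w).re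
      = ∑ u, ∑ v, ((starRingEnd ℂ) (w u) * (H u v * w v)).re := by
  rw [dotProduct, Complex.re_sum]
  refine Finset.sum_congr rfl fun u _ => ?_
  rw [Pi.star_apply, mulVec, dotProduct, Finset.mul_sum, Complex.re_sum, Complex.star_def]

lemma myRayleigh {V : Type*} [Fintype V] [DecidableEq V]
    {H : Matrix V V ℂ} (hH : H.IsHermitian) {c : ℝ}
    (hc : ∀ i, hH.eigenvalues i ≤ c) (w : V → ℂ) :
    (star w ⬝ᵥ H *ᵥ w).re ≤ c * ∑ i, Complex.normSq (w i) := by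
  classical
  set U : Matrix V V ℂ := (hH.eigenvectorUnitary : Matrix V V ℂ) with hU
  set z : V → ℂ := star U *ᵥ w with hz
  have hstarz : star z = star w ᵥ* U := by
    rw [hz, star_mulVec, Matrix.star_eq_conjTranspose, conjTranspose_conjTranspose]
  have key : star w ⬝ᵥ H *ᵥ w
      = star z ⬝ᵥ (diagonal (RCLike.ofReal ∘ hH.eigenvalues)) *ᵥ z := by
    conv_lhs => rw [hH.spectral_theorem, Unitary.conjStarAlgAut_apply]
    rw [← Matrix.mulVec_mulVec, ← Matrix.mulVec_mulVec, Matrix.dotProduct_mulVec, hstarz,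
      ← Matrix.dotProduct_mulVec]
  have hdot : ∀ v : V → ℂ, star v ⬝ᵥ v = ((∑ i, Complex.normSq (v i) : ℝ) : ℂ) := by
    intro v
    push_cast
    simp [dotProduct, Complex.normSq_eq_conj_mul_self]
  have hnorm : ∑ i, Complex.normSq (z i) = ∑ i, Complex.normSq (w i) := by
    have h1 : star z ⬝ᵥ z = star w ⬝ᵥ w := by
      have hUU : U * star U = 1 := mem_unitaryGroup_iff.mp hH.eigenvectorUnitary.2
      rw [hstarz, hz, ← Matrix.dotProduct_mulVec, Matrix.mulVec_mulVec, hUU, Matrix.one_mulVec]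
    rw [hdot z, hdot w] at h1
    exact_mod_cast h1
  have expand : (star z ⬝ᵥ (diagonal (RCLike.ofReal ∘ hH.eigenvalues)) *ᵥ z).re
      = ∑ i, hH.eigenvalues i * Complex.normSq (z i) := by
    rw [dotProduct, Complex.re_sum]
    refine Finset.sum_congr rfl fun i _ => ?_
    simp [mulVec_diagonal, Complex.normSq_apply, Complex.mul_re, Complex.mul_im]
    ring
  rw [key, expand, ← hnorm]
  calc ∑ i, hH.eigenvalues i * Complex.normSq (z i)
      ≤ ∑ i, c * Complex.normSq (z i) :=
        Finset.sum_le_sum fun i _ => mul_le_mul_of_nonneg_right (hc i) (Complex.normSq_nonneg _)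
    _ = c * ∑ i, Complex.normSq (z i) := by rw [Finset.mul_sum]

lemma myRealForm {V : Type*} [Fintype V] (H : Matrix V V ℂ) (v : V → ℝ) :
    (star (fun i => (v i : ℂ)) ⬝ᵥ H *ᵥ (fun i => (v i : ℂ))).re
      = ∑ u, ∑ t, v u * v t * (H u t).re := by
  rw [myRexpand]
  refine Finset.sum_congr rfl fun u _ => Finset.sum_congr rfl fun t _ => ?_
  simp [Complex.mul_re, Complex.mul_im]
  ring

lemma myRealLower {V : Type*} [Fintype V] [DecidableEq V]
    {H : Matrix V V ℂ} (hH : H.IsHermitian) {c : ℝ}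
    (hc : ∀ i, hH.eigenvalues i ≤ c) (hpos : ∀ u t, 0 ≤ (H u t).re) (v : V → ℝ) :
    -(c * ∑ i, v i ^ 2) ≤ (star (fun i => (v i : ℂ)) ⬝ᵥ H *ᵥ (fun i => (v i : ℂ))).re := by
  have habs : |(star (fun i => (v i : ℂ)) ⬝ᵥ H *ᵥ (fun i => (v i : ℂ))).re|
      ≤ ∑ u, ∑ t, |v u| * |v t| * (H u t).re := by
    rw [myRealForm]
    refine (Finset.abs_sum_le_sum_abs _ _).trans (Finset.sum_le_sum fun u _ => ?_)
    refine (Finset.abs_sum_le_sum_abs _ _).trans (Finset.sum_le_sum fun t _ => ?_)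
    rw [abs_mul, abs_mul, _root_.abs_of_nonneg (hpos u t)]
  have hup : ∑ u, ∑ t, |v u| * |v t| * (H u t).re ≤ c * ∑ i, v i ^ 2 := by
    have := myRayleigh hH hc (fun i => ((|v i| : ℝ) : ℂ))
    rw [myRealForm H (fun i => |v i|)] at this
    calc ∑ u, ∑ t, |v u| * |v t| * (H u t).re
        ≤ c * ∑ i, Complex.normSq ((|v i| : ℝ) : ℂ) := this
      _ = c * ∑ i, v i ^ 2 := by
          congr 1; refine Finset.sum_congr rfl fun i _ => ?_
          rw [Complex.normSq_ofReal, ← _root_.sq_abs]; ring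
  have := (abs_le.mp (habs.trans hup)).1
  linarith

lemma myPairing {V : Type*} [Fintype V] (H : Matrix V V ℂ) (x : V → ℂ) :
    (star x ⬝ᵥ H *ᵥ x).re
        + (star (fun i => (starRingEnd ℂ) (x i)) ⬝ᵥ H *ᵥ (fun i => (starRingEnd ℂ) (x i))).re
      = 2 * ((star (fun i => ((x i).re : ℂ)) ⬝ᵥ H *ᵥ (fun i => ((x i).re : ℂ))).re
        + (star (fun i => ((x i).im : ℂ)) ⬝ᵥ H *ᵥ (fun i => ((x i).im : ℂ))).re) := by
  rw [myRexpand, myRexpand, myRealForm, myRealForm]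
  simp only [← Finset.sum_add_distrib, Finset.mul_sum]
  refine Finset.sum_congr rfl fun u _ => Finset.sum_congr rfl fun t _ => ?_
  simp [Complex.mul_re, Complex.mul_im]
  ring

theorem stmt7 {V : Type*} [Fintype V] [DecidableEq V] [Nonempty V]
    (E : V → V → Prop) [DecidableRel E] (hirr : ∀ v, ¬ E v v)
    (hH : (hermAdj E).IsHermitian) :
    Finset.univ.sup' Finset.univ_nonempty hH.eigenvalues ≤
      Finset.univ.sup' Finset.univ_nonempty (fun i => |hH.eigenvalues i|) ∧
    Finset.univ.sup' Finset.univ_nonempty (fun i => |hH.eigenvalues i|) ≤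
      3 * Finset.univ.sup' Finset.univ_nonempty hH.eigenvalues := by
  classical
  set H := hermAdj E with hHdef
  set c := Finset.univ.sup' Finset.univ_nonempty hH.eigenvalues with hcdef
  have hc : ∀ i, hH.eigenvalues i ≤ c := fun i => Finset.le_sup' _ (Finset.mem_univ i)
  have hpos : ∀ u t, 0 ≤ (hermAdj E u t).re := by
    intro u t
    simp only [hermAdj]
    split_ifs <;> simp
  have hc0 : 0 ≤ c := by
    obtain ⟨u⟩ := ‹Nonempty V›
    set w : V → ℂ := fun i => if i = u then 1 else 0 with hwdef
    have h0 := myRayleigh hH hc w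
    have e1 : (star w ⬝ᵥ hermAdj E *ᵥ w) = hermAdj E u u := by
      simp [hwdef, dotProduct, mulVec, apply_ite, mul_ite]
    have e2 : hermAdj E u u = 0 := by
      simp [hermAdj, hirr u]
    have e3 : ∑ i, Complex.normSq (w i) = 1 := by
      simp [hwdef, apply_ite]
    rw [e1, e2, e3] at h0
    simpa using h0
  have hlow : ∀ j, -(3 * c) ≤ hH.eigenvalues j := by
    intro j
    set x : V → ℂ := ⇑(hH.eigenvectorBasis j) with hxdef
    have hval : hH.eigenvalues j = (star x ⬝ᵥ hermAdj E *ᵥ x).re := by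
      simpa using hH.eigenvalues_eq j
    have hnorm1 : ∑ i, Complex.normSq (x i) = 1 := by
      have hn := hH.eigenvectorBasis.orthonormal.1 j
      rw [EuclideanSpace.norm_eq] at hn
      have hnn : (0:ℝ) ≤ ∑ i, ‖hH.eigenvectorBasis j i‖ ^ 2 :=
        Finset.sum_nonneg fun i _ => sq_nonneg _
      have h2 : ∑ i, ‖hH.eigenvectorBasis j i‖ ^ 2 = 1 := by
        rw [← Real.sq_sqrt hnn, hn]; norm_num
      calc ∑ i, Complex.normSq (x i) = ∑ i, ‖hH.eigenvectorBasis j i‖ ^ 2 :=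
            Finset.sum_congr rfl fun i _ => by
              rw [Complex.normSq_eq_norm_sq]
        _ = 1 := h2
    have hsplit : ∑ i, (x i).re ^ 2 + ∑ i, (x i).im ^ 2 = 1 := by
      rw [← Finset.sum_add_distrib, ← hnorm1]
      exact Finset.sum_congr rfl fun i _ => by rw [Complex.normSq_apply]; ring
    have h1 := myRealLower hH hc hpos (fun i => (x i).re)
    have h2 := myRealLower hH hc hpos (fun i => (x i).im)
    have h3 := myRayleigh hH hc (fun i => (starRingEnd ℂ) (x i))
    have h3' : ∑ i, Complex.normSq ((starRingEnd ℂ) (x i)) = 1 := by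
      rw [← hnorm1]
      exact Finset.sum_congr rfl fun i _ => Complex.normSq_conj _
    rw [h3'] at h3
    have hpair := myPairing (hermAdj E) x
    rw [hval]
    have e1 : ∑ i, (fun i => (x i).re) i ^ 2 = ∑ i, (x i).re ^ 2 := rfl
    have e2 : ∑ i, (fun i => (x i).im) i ^ 2 = ∑ i, (x i).im ^ 2 := rfl
    rw [e1] at h1
    rw [e2] at h2
    nlinarith [hsplit, h1, h2, h3, hpair, hc0]
  constructor
  · refine Finset.sup'_le _ _ fun i _ => ?_
    exact (le_abs_self _).trans (Finset.le_sup' (fun i => |hH.eigenvalues i|) (Finset.mem_univ i))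
  · refine Finset.sup'_le _ _ fun i _ => ?_
    rw [abs_le]
    constructor
    · have := hlow i; linarith
    · have := hc i; linarith
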